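/- Let g be C² on a half-line, with g' eventually monotone and nonvanishing, g nonvanishing, lim_{x→∞} x·g'(x)/g(x) = α ≠ 0, and lim_{x→∞} x·g''(x)/g'(x) = α - 1. Then for every h ≠ 0, lim_{x→∞} (g(x+h) - g(x))/g'(x) = h; in particular g(x+h) - g(x) ∼ h·g'(x) and g(x+h) - g(x) ∼ (h·α)·g(x)/x as x → ∞. -/

import Mathlib

open Filter Set

lemma sign_const_aux {f : ℝ → ℝ} {x₀ : ℝ} (hc : ContinuousOn f (Ioi x₀))
    (hne : ∀ x ∈ Ioi x₀, f x ≠ 0) :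
    ∃ s : ℝ, (s = 1 ∨ s = -1) ∧ ∀ x ∈ Ioi x₀, 0 < s * f x := by
  have key : ∀ a ∈ Ioi x₀, ∀ b ∈ Ioi x₀, 0 < f a → 0 < f b := by
    intro a ha b hb hfa
    by_contra hfb
    have hfb' : f b < 0 := lt_of_le_of_ne (not_lt.1 hfb) (hne b hb)
    rcases le_total a b with hab | hba
    · have hsub : Icc a b ⊆ Ioi x₀ := fun y hy => lt_of_lt_of_le ha hy.1
      obtain ⟨c, hc1, hc2⟩ := intermediate_value_Icc' hab (hc.mono hsub)
        (⟨hfb'.le, hfa.le⟩ : (0:ℝ) ∈ Icc (f b) (f a))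
      exact hne c (hsub hc1) hc2
    · have hsub : Icc b a ⊆ Ioi x₀ := fun y hy => lt_of_lt_of_le hb hy.1
      obtain ⟨c, hc1, hc2⟩ := intermediate_value_Icc hba (hc.mono hsub)
        (⟨hfb'.le, hfa.le⟩ : (0:ℝ) ∈ Icc (f b) (f a))
      exact hne c (hsub hc1) hc2
  have hp : x₀ + 1 ∈ Ioi x₀ := by simp
  rcases lt_or_gt_of_ne (hne _ hp) with hneg | hpos
  · refine ⟨-1, Or.inr rfl, fun x hx => ?_⟩
    have : ¬ (0 < f x) := fun hfx => absurd (key x hx _ hp hfx) (by linarith)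
    have : f x < 0 := lt_of_le_of_ne (not_lt.1 this) (hne x hx)
    linarith
  · exact ⟨1, Or.inl rfl, fun x hx => by simpa using key _ hp x hx hpos⟩


/-- If `g` is C² on `[x₀, ∞)`, `g` and `g'` nonvanishing there, `g'` monotone on the
half-line, `x g'(x)/g(x) → α ≠ 0` and `x g''(x)/g'(x) → α - 1`, then for every `h ≠ 0`,
`(g(x+h) - g x)/g'(x) → h`; in particular `g(x+h) - g x ∼ h·g'(x)` and
`g(x+h) - g x ∼ (h·α)·g x / x`. -/
theorem stmt3 (g : ℝ → ℝ) (x₀ α : ℝ)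
    (hg : ContDiffOn ℝ 2 g (Ici x₀))
    (hne : ∀ x ∈ Ici x₀, g x ≠ 0)
    (hne' : ∀ x ∈ Ici x₀, deriv g x ≠ 0)
    (hmono : MonotoneOn (deriv g) (Ici x₀) ∨ AntitoneOn (deriv g) (Ici x₀))
    (hα : Tendsto (fun x => x * deriv g x / g x) atTop (nhds α)) (hα0 : α ≠ 0)
    (hα' : Tendsto (fun x => x * deriv (deriv g) x / deriv g x) atTop (nhds (α - 1))) :
    ∀ h : ℝ, h ≠ 0 →
      Tendsto (fun x => (g (x + h) - g x) / deriv g x) atTop (nhds h) ∧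
      Tendsto (fun x => (g (x + h) - g x) / (h * deriv g x)) atTop (nhds 1) ∧
      Tendsto (fun x => (g (x + h) - g x) / ((h * α) * g x / x)) atTop (nhds 1) := by
  intro h hh
  -- basic differentiability facts
  have hgo : ContDiffOn ℝ 2 g (Ioi x₀) := hg.mono Ioi_subset_Ici_self
  have hd1c : ContDiffOn ℝ 1 (deriv g) (Ioi x₀) :=
    hgo.deriv_of_isOpen isOpen_Ioi (m := 1) (by norm_num)
  have hdg : ∀ x ∈ Ioi x₀, HasDerivAt g (deriv g x) x := fun x hx =>
    ((hgo.differentiableOn (by norm_num)).differentiableAt (isOpen_Ioi.mem_nhds hx)).hasDerivAt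
  have hddg : ∀ x ∈ Ioi x₀, HasDerivAt (deriv g) (deriv (deriv g) x) x := fun x hx =>
    ((hd1c.differentiableOn (by norm_num)).differentiableAt (isOpen_Ioi.mem_nhds hx)).hasDerivAt
  -- constant sign of deriv g
  obtain ⟨s, hs1, hspos⟩ := sign_const_aux hd1c.continuousOn
    (fun x hx => hne' x (Ioi_subset_Ici_self hx))
  have hs0 : s ≠ 0 := by rcases hs1 with rfl | rfl <;> norm_num
  -- the log of |g'|
  set L : ℝ → ℝ := fun x => Real.log (s * deriv g x) with hL
  have hLd : ∀ x ∈ Ioi x₀, HasDerivAt L (deriv (deriv g) x / deriv g x) x := by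
    intro x hx
    have h1 : HasDerivAt (fun y => s * deriv g y) (s * deriv (deriv g) x) x :=
      (hddg x hx).const_mul s
    have h2 := h1.log (ne_of_gt (hspos x hx))
    simpa [mul_div_mul_left _ _ hs0] using h2
  -- the bound threshold
  set C : ℝ := |α - 1| + 1 with hC
  have hC0 : 0 < C := by positivity
  have hev : ∀ᶠ t in atTop, x₀ < t ∧ (1:ℝ) ≤ t ∧ |t * deriv (deriv g) t / deriv g t| ≤ C := by
    have h1 := Metric.tendsto_nhds.mp hα' 1 one_pos
    filter_upwards [h1, eventually_gt_atTop x₀, eventually_ge_atTop (1:ℝ)] with t ht1 h2 h3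
    rw [Real.dist_eq] at ht1
    refine ⟨h2, h3, ?_⟩
    have := abs_sub_abs_le_abs_sub (t * deriv (deriv g) t / deriv g t) (α - 1)
    simp only [hC]; linarith
  obtain ⟨X₁, hX₁⟩ := eventually_atTop.mp hev
  set X : ℝ := max X₁ 0 with hXdef
  have hX : ∀ b ≥ X, x₀ < b ∧ (1:ℝ) ≤ b ∧ |b * deriv (deriv g) b / deriv g b| ≤ C :=
    fun b hb => hX₁ b (le_trans (le_max_left _ _) hb)
  have hX0 : (0:ℝ) ≤ X := le_max_right _ _
  -- the ratio function
  set r : ℝ → ℝ := fun x => (s * deriv g (x + h)) / (s * deriv g x) with hrdef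
  -- Step A : L (x+h) - L x → 0
  have hL0 : Tendsto (fun x => L (x + h) - L x) atTop (nhds 0) := by
    apply squeeze_zero_norm' (a := fun x => |h| * (C / (x - |h|)))
    · filter_upwards [eventually_ge_atTop (X + |h| + 1)] with x hx
      have habs : 0 ≤ |h| := abs_nonneg h
      set a : ℝ := min x (x + h) with ha
      set b : ℝ := max x (x + h) with hb
      have hab : a < b := by
        rcases lt_or_gt_of_ne hh with h1 | h1
        · simp only [ha, hb]
          rw [min_eq_right (by linarith), max_eq_left (by linarith)]; linarith
        · simp only [ha, hb]
          rw [min_eq_left (by linarith), max_eq_right (by linarith)]; linarith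
      have hxa' : x - |h| ≤ a := by
        rcases abs_cases h with ⟨he, _⟩ | ⟨he, _⟩ <;> simp only [ha] <;>
          first
          | (rw [min_eq_left (by linarith)]; linarith)
          | (rw [min_eq_right (by linarith)]; linarith)
      have haX : X + 1 ≤ a := by linarith
      have hsub : Icc a b ⊆ Ioi x₀ := by
        intro y hy
        have := hX a (by linarith)
        exact lt_of_lt_of_le this.1 hy.1
      have hcont : ContinuousOn L (Icc a b) := fun t ht =>
        ((hLd t (hsub ht)).continuousAt).continuousWithinAt
      obtain ⟨c, hcmem, hcslope⟩ := exists_hasDerivAt_eq_slope L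
        (fun t => deriv (deriv g) t / deriv g t) hab hcont
        (fun t ht => hLd t (hsub ⟨ht.1.le, ht.2.le⟩))
      have hcX : X ≤ c := by linarith [hcmem.1]
      obtain ⟨hcx₀, hc1, hcbd⟩ := hX c hcX
      have hc0 : (0:ℝ) < c := by linarith
      have hq : |deriv (deriv g) c / deriv g c| ≤ C / c := by
        rw [le_div_iff₀ hc0]
        calc |deriv (deriv g) c / deriv g c| * c
            = |c * deriv (deriv g) c / deriv g c| := by
              rw [mul_div_assoc, abs_mul, abs_of_pos hc0]; ring
          _ ≤ C := hcbd
      have hba : b - a = |h| := by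
        have := max_sub_min_eq_abs x (x + h)
        simp only [ha, hb, this]
        rw [abs_sub_comm]; simp
      have hLba : L b - L a = (b - a) * (deriv (deriv g) c / deriv g c) := by
        rw [hcslope, mul_comm, div_mul_cancel₀ _ (ne_of_gt (by linarith : (0:ℝ) < b - a))]
      have hxa : 0 < x - |h| := by linarith
      have hxac : x - |h| ≤ c := le_trans hxa' hcmem.1.le
      have hCx : C / c ≤ C / (x - |h|) := div_le_div_of_nonneg_left hC0.le hxa hxac |>.trans_eq rfl
      have habs2 : |L (x + h) - L x| = |L b - L a| := by
        rcases le_total 0 h with h1 | h1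
        · simp only [ha, hb]
          rw [min_eq_left (by linarith), max_eq_right (by linarith)]
        · simp only [ha, hb]
          rw [min_eq_right (by linarith), max_eq_left (by linarith), abs_sub_comm]
      rw [Real.norm_eq_abs, habs2, hLba, abs_mul, abs_of_pos (by linarith : (0:ℝ) < b - a), hba]
      exact mul_le_mul_of_nonneg_left (hq.trans hCx) habs
    · have h1 : Tendsto (fun x : ℝ => x - |h|) atTop atTop :=
        tendsto_atTop_add_const_right _ _ tendsto_id
      have h2 : Tendsto (fun x : ℝ => C / (x - |h|)) atTop (nhds 0) :=
        Tendsto.div_atTop tendsto_const_nhds h1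
      simpa using h2.const_mul |h|
  -- Step A' : r → 1
  have hrt : Tendsto r atTop (nhds 1) := by
    have hexp : Tendsto (fun x => Real.exp (L (x + h) - L x)) atTop (nhds 1) := by
      have := (Real.continuous_exp.tendsto 0).comp hL0
      simpa [Function.comp_def] using this
    apply hexp.congr'
    filter_upwards [eventually_gt_atTop x₀, eventually_gt_atTop (x₀ + |h|)] with x hx1 hx2
    have hxh : x₀ < x + h := by
      rcases abs_cases h with ⟨he, _⟩ | ⟨he, _⟩ <;> linarith
    rw [Real.exp_sub, Real.exp_log (hspos _ hxh), Real.exp_log (hspos _ hx1)]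
  -- Step B : the central ratio
  set T : ℝ → ℝ := fun x => (g (x + h) - g x) / (h * deriv g x) with hT
  have hTbnd : ∀ᶠ x in atTop, min 1 (r x) ≤ T x ∧ T x ≤ max 1 (r x) := by
    filter_upwards [eventually_gt_atTop x₀, eventually_gt_atTop (x₀ + |h|)] with x hx1 hx2
    have hxh : x₀ < x + h := by
      rcases abs_cases h with ⟨he, _⟩ | ⟨he, _⟩ <;> linarith
    set a : ℝ := min x (x + h) with ha
    set b : ℝ := max x (x + h) with hb
    have hab : a < b := by
      rcases lt_or_gt_of_ne hh with h1 | h1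
      · simp only [ha, hb]
        rw [min_eq_right (by linarith), max_eq_left (by linarith)]; linarith
      · simp only [ha, hb]
        rw [min_eq_left (by linarith), max_eq_right (by linarith)]; linarith
    have hax₀ : x₀ < a := lt_min hx1 hxh
    have hsub : Icc a b ⊆ Ioi x₀ := fun y hy => lt_of_lt_of_le hax₀ hy.1
    have hcont : ContinuousOn g (Icc a b) := fun t ht =>
      ((hdg t (hsub ht)).continuousAt).continuousWithinAt
    obtain ⟨c, hcmem, hcslope⟩ := exists_hasDerivAt_eq_slope g (deriv g) hab hcont
      (fun t ht => hdg t (hsub ⟨ht.1.le, ht.2.le⟩))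
    have hcIoi : c ∈ Ioi x₀ := hsub ⟨hcmem.1.le, hcmem.2.le⟩
    -- g (x+h) - g x = h * deriv g c
    have hgdiff : g (x + h) - g x = h * deriv g c := by
      have hba : g b - g a = (b - a) * deriv g c := by
        rw [hcslope, mul_comm, div_mul_cancel₀ _ (ne_of_gt (by linarith : (0:ℝ) < b - a))]
      rcases lt_or_gt_of_ne hh with h1 | h1
      · have haeq : a = x + h := by simp only [ha]; rw [min_eq_right (by linarith)]
        have hbeq : b = x := by simp only [hb]; rw [max_eq_left (by linarith)]
        rw [haeq, hbeq] at hba; linarith [hba]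
      · have haeq : a = x := by simp only [ha]; rw [min_eq_left (by linarith)]
        have hbeq : b = x + h := by simp only [hb]; rw [max_eq_right (by linarith)]
        rw [haeq, hbeq] at hba; linarith [hba]
    have hTx : T x = (s * deriv g c) / (s * deriv g x) := by
      simp only [hT, hgdiff]
      rw [mul_div_mul_left _ _ hh, ← mul_div_mul_left (deriv g c) (deriv g x) hs0]
    -- deriv g c is between deriv g x and deriv g (x+h)
    have hcbet : min (deriv g x) (deriv g (x + h)) ≤ deriv g c ∧
        deriv g c ≤ max (deriv g x) (deriv g (x + h)) := by
      have hxI : x ∈ Ici x₀ := hx1.le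
      have hxhI : x + h ∈ Ici x₀ := hxh.le
      have hcI : c ∈ Ici x₀ := Ioi_subset_Ici_self hcIoi
      rcases lt_or_gt_of_ne hh with h1 | h1
      · -- a = x + h, b = x : x + h < c < x
        have hc1 : x + h ≤ c := by
          have : a ≤ c := hcmem.1.le
          simp only [ha] at this; rw [min_eq_right (by linarith)] at this; exact this
        have hc2 : c ≤ x := by
          have : c ≤ b := hcmem.2.le
          simp only [hb] at this; rw [max_eq_left (by linarith)] at this; exact this
        rcases hmono with hm | hm
        · exact ⟨le_trans (min_le_right _ _) (hm hxhI hcI hc1),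
            le_trans (hm hcI hxI hc2) (le_max_left _ _)⟩
        · exact ⟨le_trans (min_le_left _ _) (hm hcI hxI hc2),
            le_trans (hm hxhI hcI hc1) (le_max_right _ _)⟩
      · -- a = x, b = x + h
        have hc1 : x ≤ c := by
          have : a ≤ c := hcmem.1.le
          simp only [ha] at this; rw [min_eq_left (by linarith)] at this; exact this
        have hc2 : c ≤ x + h := by
          have : c ≤ b := hcmem.2.le
          simp only [hb] at this; rw [max_eq_right (by linarith)] at this; exact this
        rcases hmono with hm | hm
        · exact ⟨le_trans (min_le_left _ _) (hm hxI hcI hc1),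
            le_trans (hm hcI hxhI hc2) (le_max_right _ _)⟩
        · exact ⟨le_trans (min_le_right _ _) (hm hcI hxhI hc2),
            le_trans (hm hxI hcI hc1) (le_max_left _ _)⟩
    have hsbet : min (s * deriv g x) (s * deriv g (x + h)) ≤ s * deriv g c ∧
        s * deriv g c ≤ max (s * deriv g x) (s * deriv g (x + h)) := by
      rcases hs1 with rfl | rfl
      · simpa using hcbet
      · constructor
        · simp only [neg_mul, one_mul, min_neg_neg]; linarith [hcbet.2]
        · simp only [neg_mul, one_mul, max_neg_neg]; linarith [hcbet.1]
    have hx0 : 0 < s * deriv g x := hspos x hx1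
    have hxh0 : 0 < s * deriv g (x + h) := hspos _ hxh
    have hrx : r x = (s * deriv g (x + h)) / (s * deriv g x) := rfl
    constructor
    · rcases min_cases (s * deriv g x) (s * deriv g (x + h)) with ⟨hm, _⟩ | ⟨hm, _⟩
      · refine le_trans (min_le_left _ _) ?_
        rw [hTx, le_div_iff₀ hx0]
        rw [hm] at hsbet
        linarith [hsbet.1]
      · refine le_trans (min_le_right _ _) ?_
        rw [hTx, hrx]
        rw [hm] at hsbet
        exact (div_le_div_iff_of_pos_right hx0).2 hsbet.1
    · rcases max_cases (s * deriv g x) (s * deriv g (x + h)) with ⟨hm, _⟩ | ⟨hm, _⟩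
      · refine le_trans ?_ (le_max_left _ _)
        rw [hTx, div_le_one hx0]
        rw [hm] at hsbet
        linarith [hsbet.2]
      · refine le_trans ?_ (le_max_right _ _)
        rw [hTx, hrx]
        rw [hm] at hsbet
        exact (div_le_div_iff_of_pos_right hx0).2 hsbet.2
  have hTt : Tendsto T atTop (nhds 1) := by
    have hlo : Tendsto (fun x => min 1 (r x)) atTop (nhds 1) := by
      have := tendsto_const_nhds (x := (1:ℝ)) (f := atTop) |>.min hrt
      simpa using this
    have hhi : Tendsto (fun x => max 1 (r x)) atTop (nhds 1) := by
      have := tendsto_const_nhds (x := (1:ℝ)) (f := atTop) |>.max hrt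
      simpa using this
    exact tendsto_of_tendsto_of_tendsto_of_le_of_le' hlo hhi
      (hTbnd.mono fun x hx => hx.1) (hTbnd.mono fun x hx => hx.2)
  refine ⟨?_, hTt, ?_⟩
  · have := hTt.const_mul h
    rw [mul_one] at this
    apply this.congr
    intro x
    show h * ((g (x + h) - g x) / (h * deriv g x)) = (g (x + h) - g x) / deriv g x
    rw [mul_div_assoc', mul_div_mul_left _ _ hh]
  · have hV : Tendsto (fun x => T x * (x * deriv g x / g x) / α) atTop (nhds 1) := by
      have := (hTt.mul hα).div_const α
      rw [one_mul, div_self hα0] at this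
      exact this
    apply hV.congr'
    filter_upwards [eventually_gt_atTop x₀, eventually_gt_atTop 0] with x hx1 hx0
    have hgx := hne x hx1.le
    have hgx' := hne' x hx1.le
    show (g (x + h) - g x) / (h * deriv g x) * (x * deriv g x / g x) / α =
        (g (x + h) - g x) / ((h * α) * g x / x)
    field_simp
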